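/- Let $C \subseteq \mathbb{R}^n$ be a pointed rational cone of dimension $n$ with support forms $\sigma_1, \dots, \sigma_s$ and facets $F_1, \dots, F_s$, and let $y_1, \dots, y_m \in C \cap \mathbb{Z}^n$ be such that the sets $\sigma^>(y_i)$ partition $\{1, \dots, s\}$ and $\sigma_j(y_1 + \cdots + y_m) = 1$ for all $j$. Then $y_1, \dots, y_m$ are part of a $\mathbb{Z}$-basis of $\mathbb{Z}^n$; in particular they are linearly independent. -/

import Mathlib

open scoped BigOperators

noncomputable section

/-- The canonical map `ℤⁿ → ℝⁿ`. -/
def toR {n : ℕ} (z : Fin n → ℤ) : Fin n → ℝ := fun i => (z i : ℝ)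

/-- The real extension of an integral linear form. -/
def realForm {n : ℕ} (ℓ : (Fin n → ℤ) →ₗ[ℤ] ℤ) (x : Fin n → ℝ) : ℝ :=
  ∑ k, (ℓ (Pi.single k 1) : ℝ) * x k

theorem realForm_toR {n : ℕ} (ℓ : (Fin n → ℤ) →ₗ[ℤ] ℤ) (z : Fin n → ℤ) :
    realForm ℓ (toR z) = (ℓ z : ℝ) := by
  have h : ℓ z = ∑ k, z k * ℓ (Pi.single k 1) := by
    conv_lhs => rw [LinearMap.pi_apply_eq_sum_univ ℓ z]
    refine Finset.sum_congr rfl fun k _ => ?_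
    rw [smul_eq_mul]
    congr 2
    ext j
    simp [Pi.single_apply, eq_comm]
  rw [realForm, h]
  push_cast
  exact Finset.sum_congr rfl fun k _ => by rw [mul_comm]; rfl

/-- if the supports `σ^>(yᵢ)` of lattice points `y₁, …, y_m` of a
full-dimensional pointed rational cone `C ⊆ ℝⁿ` partition the set of facets and
`σⱼ(y₁ + ⋯ + y_m) = 1` for all `j`, then `y₁, …, y_m` are part of a `ℤ`-basis of `ℤⁿ`;
in particular they are linearly independent. -/
theorem part_of_basis_of_partition
    (n s m : ℕ) (σ : Fin s → ((Fin n → ℤ) →ₗ[ℤ] ℤ))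
    (C : Set (Fin n → ℝ)) (hC : C = {x | ∀ j, 0 ≤ realForm (σ j) x})
    (hirr : ∀ i, ∃ x, (∀ j, j ≠ i → 0 ≤ realForm (σ j) x) ∧ realForm (σ i) x < 0)
    (hpointed : ∀ x, x ∈ C → -x ∈ C → x = 0)
    (hfulldim : ∃ x, ∀ j, 0 < realForm (σ j) x)
    (hprim : ∀ i, Finset.univ.gcd (fun k => σ i (Pi.single k 1)) = 1)
    (y : Fin m → (Fin n → ℤ)) (hyC : ∀ i, toR (y i) ∈ C)
    (hdisj : ∀ i i', i ≠ i' → ∀ j, σ j (y i) = 0 ∨ σ j (y i') = 0)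
    (hne : ∀ i, ∃ j, 0 < σ j (y i))
    (hsum : ∀ j, σ j (∑ i, y i) = 1) :
    (∃ (b : Module.Basis (Fin n) ℤ (Fin n → ℤ)) (g : Fin m → Fin n),
      Function.Injective g ∧ ∀ i, b (g i) = y i) ∧
    LinearIndependent ℤ y := by
  classical
  -- nonnegativity of all support forms on the yᵢ
  have hnonneg : ∀ j i, 0 ≤ σ j (y i) := by
    intro j i
    have := hyC i
    rw [hC] at this
    have h := this j
    rw [realForm_toR] at h
    exact_mod_cast h
  -- choose, for each i, a facet where yᵢ has value 1 and all other y's vanish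
  have hkey : ∀ i, ∃ j, σ j (y i) = 1 ∧ ∀ k, k ≠ i → σ j (y k) = 0 := by
    intro i
    obtain ⟨j, hj⟩ := hne i
    have hz : ∀ k, k ≠ i → σ j (y k) = 0 := by
      intro k hk
      rcases hdisj i k (fun h => hk h.symm) j with h | h
      · omega
      · exact h
    refine ⟨j, ?_, hz⟩
    have := hsum j
    rw [map_sum] at this
    rw [Finset.sum_eq_single i (fun k _ hk => hz k hk) (by simp)] at this
    exact this
  choose jj hjj1 hjj0 using hkey
  set f : Fin m → ((Fin n → ℤ) →ₗ[ℤ] ℤ) := fun i => σ (jj i) with hf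
  have hdual : ∀ i k, f i (y k) = if i = k then 1 else 0 := by
    intro i k
    by_cases h : i = k
    · subst h; simp [hf, hjj1 i]
    · simp [hf, h, hjj0 i k (Ne.symm h)]
  -- linear independence
  have hli : LinearIndependent ℤ y := by
    rw [Fintype.linearIndependent_iff]
    intro g hg i
    have := congrArg (f i) hg
    rw [map_sum, map_zero] at this
    simp only [map_smul, hdual, smul_eq_mul, mul_ite, mul_one, mul_zero] at this
    rwa [Finset.sum_ite_eq Finset.univ i g, if_pos (Finset.mem_univ i)] at this
  refine ⟨?_, hli⟩
  -- the projection P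
  set P : (Fin n → ℤ) →ₗ[ℤ] (Fin n → ℤ) := ∑ i, (f i).smulRight (y i) with hP
  have hPapp : ∀ z, P z = ∑ i, f i z • y i := by
    intro z; simp [hP, LinearMap.sum_apply]
  have hfP : ∀ i z, f i (P z) = f i z := by
    intro i z
    rw [hPapp, map_sum]
    simp only [map_smul, hdual, smul_eq_mul, mul_ite, mul_one, mul_zero]
    rw [Finset.sum_ite_eq Finset.univ i (fun k => f k z), if_pos (Finset.mem_univ i)]
  have hker0 : ∀ z, P z = 0 → ∀ i, f i z = 0 := by
    intro z hz i
    have := congrArg (f i) hz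
    rw [hfP, map_zero] at this
    exact this
  -- basis of the kernel
  obtain ⟨r, c⟩ := Submodule.basisOfPid (Pi.basisFun ℤ (Fin n)) (LinearMap.ker P)
  set b' : Fin m ⊕ Fin r → (Fin n → ℤ) := Sum.elim y (fun t => (c t : Fin n → ℤ)) with hb'
  have hli' : LinearIndependent ℤ b' := by
    rw [Fintype.linearIndependent_iff]
    intro g hg
    rw [Fintype.sum_sum_type] at hg
    simp only [hb', Sum.elim_inl, Sum.elim_inr] at hg
    set w : LinearMap.ker P := ∑ t, g (Sum.inr t) • c t with hw
    have hwc : (w : Fin n → ℤ) = ∑ t, g (Sum.inr t) • (c t : Fin n → ℤ) := by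
      rw [hw, AddSubmonoidClass.coe_finset_sum]
      exact Finset.sum_congr rfl fun t _ => SetLike.val_smul _ _ _
    have hEq : ∑ i, g (Sum.inl i) • y i + (w : Fin n → ℤ) = 0 := by
      rw [hwc]; exact hg
    have hwker : P (w : Fin n → ℤ) = 0 := w.2
    have hfl : ∀ i, g (Sum.inl i) = 0 := by
      intro i
      have := congrArg (f i) hEq
      rw [map_add, map_sum, map_zero, hker0 _ hwker i] at this
      simp only [map_smul, hdual, smul_eq_mul, mul_ite, mul_one, mul_zero] at this
      rwa [Finset.sum_ite_eq Finset.univ i (fun k => g (Sum.inl k)),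
        if_pos (Finset.mem_univ i), add_zero] at this
    have hw0 : (w : Fin n → ℤ) = 0 := by
      have : ∑ i, g (Sum.inl i) • y i = 0 := by
        apply Finset.sum_eq_zero; intro i _; rw [hfl i, zero_smul]
      rwa [this, zero_add] at hEq
    have hw0' : w = 0 := Subtype.ext hw0
    have hfr : ∀ t, g (Sum.inr t) = 0 := by
      have := Fintype.linearIndependent_iff.mp c.linearIndependent
        (fun t => g (Sum.inr t)) (by rw [← hw]; exact hw0')
      exact this
    rintro (i | t)
    · exact hfl i
    · exact hfr t
  have hsp : ⊤ ≤ Submodule.span ℤ (Set.range b') := by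
    intro z _
    have hz : z = P z + (z - P z) := by ring
    have h1 : P z ∈ Submodule.span ℤ (Set.range b') := by
      rw [hPapp]
      apply Submodule.sum_mem
      intro i _
      exact Submodule.smul_mem _ _ (Submodule.subset_span ⟨Sum.inl i, rfl⟩)
    have h2 : z - P z ∈ Submodule.span ℤ (Set.range b') := by
      have hker : P (z - P z) = 0 := by
        rw [map_sub]
        have hPP : P (P z) = P z := by
          rw [hPapp (P z)]
          simp_rw [hfP]
          rw [← hPapp z]
        rw [hPP, sub_self]
      set u : LinearMap.ker P := ⟨z - P z, hker⟩ with hu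
      have := c.sum_repr u
      have hcoe : (z - P z) = ∑ t, c.repr u t • (c t : Fin n → ℤ) := by
        have h := congrArg (Submodule.subtype (LinearMap.ker P)) this
        simp only [map_sum, map_smul] at h
        exact h.symm
      rw [hcoe]
      apply Submodule.sum_mem
      intro t _
      exact Submodule.smul_mem _ _ (Submodule.subset_span ⟨Sum.inr t, rfl⟩)
    rw [hz]
    exact Submodule.add_mem _ h1 h2
  set B : Module.Basis (Fin m ⊕ Fin r) ℤ (Fin n → ℤ) := Module.Basis.mk hli' hsp with hB
  have hcard : m + r = n := by
    have h1 := Module.finrank_eq_card_basis B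
    have h2 := Module.finrank_eq_card_basis (Pi.basisFun ℤ (Fin n))
    simp [Fintype.card_sum] at h1 h2
    omega
  set e : (Fin m ⊕ Fin r) ≃ Fin n := finSumFinEquiv.trans (finCongr hcard) with he
  refine ⟨B.reindex e, fun i => e (Sum.inl i), ?_, ?_⟩
  · exact fun i i' h => Sum.inl_injective (e.injective h)
  · intro i
    rw [Module.Basis.reindex_apply, Equiv.symm_apply_apply, hB, Module.Basis.mk_apply, hb', Sum.elim_inl]
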